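/- Let μ > 0, η > 0, and s, ε with 0 < ε < s. Set γ := 32μ/(s−ε)² and let 0 < λ ≤ (s−ε)/(4√(2μη)). Let e : [0,λ] → ℝ be continuous with e(0) = 0, differentiable on (0,λ), and satisfying e'(t) ≤ γ·e(t)² + η for all t ∈ (0,λ). Then e(t) ≤ 2tη for all t ∈ [0,λ]. -/

import Mathlib

open Real Set Filter Topology

private lemma sqrt_div_mul_sqrt_mul {p q : ℝ} (hp : 0 < p) (hq : 0 < q) :
    Real.sqrt (p / q) * Real.sqrt (p * q) = p := by
  rw [← Real.sqrt_mul (by positivity), show p / q * (p * q) = p ^ 2 by field_simp]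
  exact Real.sqrt_sq hp.le

private lemma tan_le_two_mul {x : ℝ} (h0 : 0 ≤ x) (h1 : x ≤ 1) : Real.tan x ≤ 2 * x := by
  have hπ := Real.pi_gt_three
  have hcos : 0 < Real.cos x :=
    Real.cos_pos_of_mem_Ioo ⟨by linarith, by linarith⟩
  have hcos' : 1 - x ^ 2 / 2 ≤ Real.cos x := Real.one_sub_sq_div_two_le_cos
  have hs : Real.sin x ≤ x := Real.sin_le h0
  rw [Real.tan_eq_sin_div_cos, div_le_iff₀ hcos]
  nlinarith [mul_nonneg h0 (sub_nonneg.2 h1), mul_nonneg h0 h0]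

private lemma sqrt_two_lt : Real.sqrt 2 < 1.5 := by
  rw [show (1.5 : ℝ) = Real.sqrt (1.5 ^ 2) from (Real.sqrt_sq (by norm_num)).symm]
  exact Real.sqrt_lt_sqrt (by norm_num) (by norm_num)

theorem riccati_comparison_two_t_eta (μ η s ε lam : ℝ) (hμ : 0 < μ) (hη : 0 < η)
    (hε : 0 < ε) (hεs : ε < s) (γ : ℝ) (hγ : γ = 32 * μ / (s - ε) ^ 2)
    (hlam : 0 < lam) (hlam_le : lam ≤ (s - ε) / (4 * Real.sqrt (2 * μ * η)))
    (e : ℝ → ℝ) (he_cont : ContinuousOn e (Set.Icc 0 lam)) (he0 : e 0 = 0)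
    (he_diff : ∀ t ∈ Set.Ioo 0 lam, DifferentiableAt ℝ e t)
    (he_ineq : ∀ t ∈ Set.Ioo 0 lam, deriv e t ≤ γ * e t ^ 2 + η) :
    ∀ t ∈ Set.Icc 0 lam, e t ≤ 2 * t * η := by
  have hse : 0 < s - ε := by linarith
  have hγ0 : 0 < γ := by rw [hγ]; positivity
  have h2μη : 0 < Real.sqrt (2 * μ * η) := Real.sqrt_pos.2 (by positivity)
  -- key bound: sqrt (η * γ) * lam ≤ 1
  have hβlam : Real.sqrt (η * γ) * lam ≤ 1 := by
    have hb : Real.sqrt (η * γ) = 4 * Real.sqrt (2 * μ * η) / (s - ε) := by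
      rw [hγ, show η * (32 * μ / (s - ε) ^ 2) = (4 / (s - ε)) ^ 2 * (2 * μ * η) by
        field_simp; ring]
      rw [Real.sqrt_mul (sq_nonneg _), Real.sqrt_sq (by positivity)]
      ring
    rw [hb]
    rw [div_mul_eq_mul_div, div_le_one hse]
    calc 4 * Real.sqrt (2 * μ * η) * lam
        ≤ 4 * Real.sqrt (2 * μ * η) * ((s - ε) / (4 * Real.sqrt (2 * μ * η))) := by
          apply mul_le_mul_of_nonneg_left hlam_le (by positivity)
      _ = s - ε := by field_simp
  have hβ0 : 0 ≤ Real.sqrt (η * γ) := Real.sqrt_nonneg _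
  -- Step 1: for each δ ∈ (0, η], compare with the shifted tangent solution
  have key : ∀ δ ∈ Set.Ioc (0 : ℝ) η, ∀ t ∈ Set.Icc 0 lam,
      e t ≤ Real.sqrt ((η + δ) / γ) * Real.tan (Real.sqrt ((η + δ) * γ) * t) := by
    rintro δ ⟨hδ0, hδη⟩
    set a := Real.sqrt ((η + δ) / γ) with ha_def
    set b := Real.sqrt ((η + δ) * γ) with hb_def
    have ha0 : 0 < a := Real.sqrt_pos.2 (by positivity)
    have hb0 : 0 < b := Real.sqrt_pos.2 (by positivity)
    have hab : a * b = η + δ := sqrt_div_mul_sqrt_mul (by positivity) hγ0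
    have hγa : γ * a ^ 2 = η + δ := by
      rw [ha_def, Real.sq_sqrt (by positivity)]; field_simp
    have hblam : b * lam ≤ Real.sqrt 2 := by
      have h1 : b ≤ Real.sqrt 2 * Real.sqrt (η * γ) := by
        rw [← Real.sqrt_mul (by norm_num)]
        exact Real.sqrt_le_sqrt (by nlinarith)
      calc b * lam ≤ Real.sqrt 2 * Real.sqrt (η * γ) * lam := by
            apply mul_le_mul_of_nonneg_right h1 hlam.le
        _ = Real.sqrt 2 * (Real.sqrt (η * γ) * lam) := by ring
        _ ≤ Real.sqrt 2 * 1 := by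
            apply mul_le_mul_of_nonneg_left hβlam (Real.sqrt_nonneg _)
        _ = Real.sqrt 2 := by ring
    have hπ := Real.pi_gt_three
    have hs2 := sqrt_two_lt
    have hcos : ∀ x ∈ Set.Icc (0 : ℝ) lam, 0 < Real.cos (b * x) := by
      intro x hx
      apply Real.cos_pos_of_mem_Ioo
      constructor
      · have : 0 ≤ b * x := mul_nonneg hb0.le hx.1
        linarith
      · have : b * x ≤ b * lam := mul_le_mul_of_nonneg_left hx.2 hb0.le
        have h15 : (1.5 : ℝ) < π / 2 := by linarith
        linarith
    have hB' : ∀ x ∈ Set.Icc (0 : ℝ) lam, HasDerivAt (fun t => a * Real.tan (b * t))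
        (γ * (a * Real.tan (b * x)) ^ 2 + (η + δ)) x := by
      intro x hx
      have hcx := (hcos x hx).ne'
      have htan := Real.hasDerivAt_tan hcx
      have hlin : HasDerivAt (fun t : ℝ => b * t) b x := by
        simpa using (hasDerivAt_id x).const_mul b
      have hcomp := (htan.comp x hlin).const_mul a
      have hone : (1 : ℝ) / Real.cos (b * x) ^ 2 = 1 + Real.tan (b * x) ^ 2 := by
        rw [← Real.inv_one_add_tan_sq hcx, one_div, inv_inv]
      refine hcomp.congr_deriv (Eq.symm ?_)
      rw [hone]
      linear_combination (1 + Real.tan (b * x) ^ 2) * hab.symm +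
        Real.tan (b * x) ^ 2 * hγa
    have := image_le_of_liminf_slope_right_lt_deriv_boundary'
      (f := e) (f' := fun x => γ * e x ^ 2 + η) (a := 0) (b := lam) he_cont
      ?_ (B := fun t => a * Real.tan (b * t))
      (B' := fun x => γ * (a * Real.tan (b * x)) ^ 2 + (η + δ)) ?_ ?_ ?_ ?_
    · exact fun t ht => this ht
    · -- liminf slope bound
      intro x hx r hr
      rcases hx.1.eq_or_lt with hx0 | hx0
      · -- x = 0
        subst hx0
        have hη_r : η < r := by simpa [he0] using hr
        have hcont0 : Filter.Tendsto e (𝓝[>] (0 : ℝ)) (𝓝 0) := by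
          have h1 : Filter.Tendsto e (𝓝[Set.Icc (0 : ℝ) lam] 0) (𝓝 (e 0)) :=
            he_cont.continuousWithinAt (by constructor <;> [rfl; exact hlam.le])
          rw [he0] at h1
          exact h1.mono_left (nhdsWithin_le_of_mem
            (Icc_mem_nhdsGT_of_mem ⟨le_refl 0, hlam⟩))
        have hten : Filter.Tendsto (fun z => γ * e z ^ 2 + η) (𝓝[>] (0 : ℝ))
            (𝓝 (γ * 0 ^ 2 + η)) :=
          (((hcont0.pow 2).const_mul γ).add tendsto_const_nhds)
        have hev : ∀ᶠ z in 𝓝[>] (0 : ℝ), γ * e z ^ 2 + η < r := by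
          apply hten.eventually_lt_const
          simpa using hη_r
        obtain ⟨u, hu0, hu⟩ := mem_nhdsGT_iff_exists_Ioc_subset.1 hev
        have hupos : (0 : ℝ) < u := hu0
        apply Filter.Eventually.frequently
        have hmem : Set.Ioc (0 : ℝ) (min u lam) ∈ 𝓝[>] (0 : ℝ) :=
          Ioc_mem_nhdsGT_of_mem ⟨le_refl 0, lt_min hupos hlam⟩
        filter_upwards [hmem] with z hz
        have hz0 : 0 < z := hz.1
        have hzu : z ≤ u := hz.2.trans (min_le_left _ _)
        have hzlam : z ≤ lam := hz.2.trans (min_le_right _ _)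
        obtain ⟨ξ, hξ, hξeq⟩ := exists_deriv_eq_slope' e hz0
          (he_cont.mono (Set.Icc_subset_Icc le_rfl hzlam))
          (fun y hy => (he_diff y ⟨hy.1, lt_of_lt_of_le hy.2 hzlam⟩).differentiableWithinAt)
        rw [← hξeq]
        have hξione : ξ ∈ Set.Ioo 0 lam := ⟨hξ.1, lt_of_lt_of_le hξ.2 hzlam⟩
        calc deriv e ξ ≤ γ * e ξ ^ 2 + η := he_ineq ξ hξione
          _ < r := hu ⟨hξ.1, hξ.2.le.trans hzu⟩
      · -- 0 < x
        have hd := (he_diff x ⟨hx0, hx.2⟩).hasDerivAt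
        have hten : Filter.Tendsto (slope e x) (𝓝[>] x) (𝓝 (deriv e x)) :=
          ((hasDerivAt_iff_tendsto_slope.1 hd).mono_left
            (nhdsWithin_mono x fun z hz => ne_of_gt hz))
        apply Filter.Eventually.frequently
        apply hten.eventually_lt_const
        exact lt_of_le_of_lt (he_ineq x ⟨hx0, hx.2⟩) hr
    · -- e 0 ≤ B 0
      simp [he0, Real.tan_zero]
    · -- continuity of B
      exact fun x hx => (hB' x hx).continuousAt.continuousWithinAt
    · -- right derivative of B
      exact fun x hx => (hB' x (Set.Ico_subset_Icc_self hx)).hasDerivWithinAt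
    · -- strict bound at contact points
      intro x hx heq
      show γ * e x ^ 2 + η < γ * (a * Real.tan (b * x)) ^ 2 + (η + δ)
      rw [show e x = a * Real.tan (b * x) from heq]
      linarith
  -- Step 2: pass to the limit δ → 0⁺
  intro t ht
  have hlim : e t ≤ Real.sqrt (η / γ) * Real.tan (Real.sqrt (η * γ) * t) := by
    have hcos0 : Real.cos (Real.sqrt (η * γ) * t) ≠ 0 := by
      have h1 : 0 ≤ Real.sqrt (η * γ) * t := mul_nonneg hβ0 ht.1
      have h2 : Real.sqrt (η * γ) * t ≤ 1 := by
        calc Real.sqrt (η * γ) * t ≤ Real.sqrt (η * γ) * lam :=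
              mul_le_mul_of_nonneg_left ht.2 hβ0
          _ ≤ 1 := hβlam
      have hπ := Real.pi_gt_three
      exact (Real.cos_pos_of_mem_Ioo ⟨by linarith, by linarith⟩).ne'
    have hF : ContinuousAt (fun δ : ℝ =>
        Real.sqrt ((η + δ) / γ) * Real.tan (Real.sqrt ((η + δ) * γ) * t)) 0 := by
      have hc1 : ContinuousAt (fun δ : ℝ => Real.sqrt ((η + δ) / γ)) 0 :=
        Real.continuous_sqrt.continuousAt.comp (by fun_prop)
      have hc2 : ContinuousAt (fun δ : ℝ => Real.sqrt ((η + δ) * γ) * t) 0 := by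
        exact (Real.continuous_sqrt.continuousAt.comp (by fun_prop)).mul
          continuousAt_const
      have hc3 : ContinuousAt Real.tan (Real.sqrt ((η + 0) * γ) * t) := by
        rw [Real.continuousAt_tan]
        simpa using hcos0
      have hc4 : ContinuousAt (fun δ : ℝ =>
          Real.tan (Real.sqrt ((η + δ) * γ) * t)) 0 :=
        ContinuousAt.comp (f := fun δ : ℝ => Real.sqrt ((η + δ) * γ) * t) hc3 hc2
      exact hc1.mul hc4
    have hten : Filter.Tendsto (fun δ : ℝ =>
        Real.sqrt ((η + δ) / γ) * Real.tan (Real.sqrt ((η + δ) * γ) * t))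
        (𝓝[>] (0 : ℝ)) (𝓝 (Real.sqrt (η / γ) * Real.tan (Real.sqrt (η * γ) * t))) := by
      have h := hF.continuousWithinAt (s := Set.Ioi (0 : ℝ))
      have h2 : Filter.Tendsto (fun δ : ℝ =>
          Real.sqrt ((η + δ) / γ) * Real.tan (Real.sqrt ((η + δ) * γ) * t))
          (𝓝[>] (0 : ℝ))
          (𝓝 (Real.sqrt ((η + 0) / γ) * Real.tan (Real.sqrt ((η + 0) * γ) * t))) := h
      simpa only [add_zero] using h2
    apply ge_of_tendsto hten
    filter_upwards [Ioc_mem_nhdsGT_of_mem ⟨le_refl (0 : ℝ), hη⟩] with δ hδ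
    exact key δ hδ t ht
  -- Step 3: tan x ≤ 2x
  have hβt0 : 0 ≤ Real.sqrt (η * γ) * t := mul_nonneg hβ0 ht.1
  have hβt1 : Real.sqrt (η * γ) * t ≤ 1 := by
    calc Real.sqrt (η * γ) * t ≤ Real.sqrt (η * γ) * lam :=
          mul_le_mul_of_nonneg_left ht.2 hβ0
      _ ≤ 1 := hβlam
  have htan := tan_le_two_mul hβt0 hβt1
  have hprod : Real.sqrt (η / γ) * Real.sqrt (η * γ) = η :=
    sqrt_div_mul_sqrt_mul hη hγ0
  calc e t ≤ Real.sqrt (η / γ) * Real.tan (Real.sqrt (η * γ) * t) := hlim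
    _ ≤ Real.sqrt (η / γ) * (2 * (Real.sqrt (η * γ) * t)) :=
        mul_le_mul_of_nonneg_left htan (Real.sqrt_nonneg _)
    _ = 2 * t * (Real.sqrt (η / γ) * Real.sqrt (η * γ)) := by ring
    _ = 2 * t * η := by rw [hprod]
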